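/- Local complementation at a vertex x does not change the cut-rank of any vertex subset: for every X ⊆ V(G), the GF(2)-rank of A_{G*x}[X, V\X] equals the GF(2)-rank of A_G[X, V\X]. -/

import Mathlib

open scoped Classical
open Matrix

lemma vecMulVec_mulVec' {m n K : Type*} [Fintype n] [CommRing K]
    (u : m → K) (v : n → K) (w : n → K) :
    (Matrix.vecMulVec u v) *ᵥ w = (v ⬝ᵥ w) • u := by
  funext i
  simp [Matrix.vecMulVec, Matrix.mulVec, dotProduct, Finset.mul_sum,
    mul_comm, mul_assoc, mul_left_comm]

lemma rank_add_vecMulVec_col {m n K : Type*} [Fintype m] [Fintype n] [DecidableEq n]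
    [Field K] (M : Matrix m n K) (u : m → K) (v : n → K) (j : n)
    (hu : ∀ i, u i = M i j) (hv : v j = 0) :
    (M + Matrix.vecMulVec u v).rank = M.rank := by
  have key : ∀ w : n → K, (M + Matrix.vecMulVec u v) *ᵥ w = M *ᵥ w + (v ⬝ᵥ w) • u := by
    intro w
    rw [Matrix.add_mulVec, vecMulVec_mulVec']
  have hus : u = M *ᵥ Pi.single j 1 := by
    funext i; simp [hu i]
  have hrange : LinearMap.range (M + Matrix.vecMulVec u v).mulVecLin
      = LinearMap.range M.mulVecLin := by
    apply le_antisymm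
    · rintro _ ⟨w, rfl⟩
      refine ⟨w + (v ⬝ᵥ w) • (Pi.single j (1:K) : n → K), ?_⟩
      simp only [Matrix.mulVecLin_apply, key, Matrix.mulVec_add, Matrix.mulVec_smul, ← hus]
    · rintro _ ⟨w, rfl⟩
      refine ⟨w - (v ⬝ᵥ w) • (Pi.single j (1:K) : n → K), ?_⟩
      simp only [Matrix.mulVecLin_apply, key]
      rw [Matrix.mulVec_sub, Matrix.mulVec_smul, ← hus]
      have : v ⬝ᵥ (w - (v ⬝ᵥ w) • (Pi.single j (1:K) : n → K)) = v ⬝ᵥ w := by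
        rw [dotProduct_sub, dotProduct_smul]
        simp [hv]
      rw [this]
      abel
  rw [Matrix.rank, Matrix.rank, hrange]

lemma rank_add_vecMulVec_row {m n K : Type*} [Fintype m] [Fintype n] [DecidableEq m]
    [Field K] (M : Matrix m n K) (u : m → K) (v : n → K) (j : m)
    (hv : ∀ i, v i = M j i) (hu : u j = 0) :
    (M + Matrix.vecMulVec u v).rank = M.rank := by
  rw [← Matrix.rank_transpose, ← Matrix.rank_transpose M]
  have : (M + Matrix.vecMulVec u v)ᵀ = Mᵀ + Matrix.vecMulVec v u := by
    funext a b; simp [Matrix.vecMulVec, Matrix.transpose_apply, mul_comm]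
  rw [this]
  exact rank_add_vecMulVec_col Mᵀ v u j (fun i => hv i) hu



variable {V : Type*} [Fintype V] [DecidableEq V]

/-- GF(2)-rank of the adjacency submatrix `A_G[X, V \ X]`. -/
noncomputable def cutrk (G : SimpleGraph V) (X : Finset V) : ℕ :=
  (Matrix.of fun (a : X) (b : (Xᶜ : Finset V)) =>
    if G.Adj a.1 b.1 then (1 : ZMod 2) else 0).rank

/-- The cutrank of a linear ordering of the vertices. -/
noncomputable def ordCutrk (G : SimpleGraph V) (e : Fin (Fintype.card V) ≃ V) : ℕ :=
  Finset.univ.sup fun i : Fin (Fintype.card V) => cutrk G ((Finset.Iic i).image e)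

/-- Linear rank-width: minimum cutrank over all linear orderings of the vertices. -/
noncomputable def lrw (G : SimpleGraph V) : ℕ :=
  ⨅ e : Fin (Fintype.card V) ≃ V, ordCutrk G e

/-- Local complementation at a vertex `x`: toggle all edges among the neighbours of `x`. -/
def localComplement (G : SimpleGraph V) (x : V) : SimpleGraph V where
  Adj a b :=
    (G.Adj a b ∧ ¬(G.Adj x a ∧ G.Adj x b)) ∨
    (¬ G.Adj a b ∧ a ≠ b ∧ G.Adj x a ∧ G.Adj x b)
  symm := by
    constructor
    intro a b h
    rcases h with ⟨hab, hn⟩ | ⟨hn, hne, hxa, hxb⟩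
    · exact Or.inl ⟨hab.symm, fun h => hn ⟨h.2, h.1⟩⟩
    · exact Or.inr ⟨fun h => hn h.symm, hne.symm, hxb, hxa⟩
  loopless := by
    constructor
    intro a h
    rcases h with ⟨hab, _⟩ | ⟨_, hne, _⟩
    · exact G.loopless.irrefl a hab
    · exact hne rfl

theorem stmt5 (G : SimpleGraph V) (x : V) (X : Finset V) :
    cutrk (localComplement G x) X = cutrk G X := by
  classical
  unfold cutrk
  set M : Matrix X (Xᶜ : Finset V) (ZMod 2) :=
    Matrix.of fun a b => if G.Adj a.1 b.1 then 1 else 0 with hMdef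
  set u : X → ZMod 2 := fun a => if G.Adj x a.1 then 1 else 0 with hudef
  set v : (Xᶜ : Finset V) → ZMod 2 := fun b => if G.Adj x b.1 then 1 else 0 with hvdef
  have hM' : (Matrix.of fun (a : X) (b : (Xᶜ : Finset V)) =>
      if (localComplement G x).Adj a.1 b.1 then (1 : ZMod 2) else 0)
      = M + Matrix.vecMulVec u v := by
    funext a b
    have hne : (a.1 : V) ≠ b.1 := by
      intro h
      exact (Finset.mem_compl.mp b.2) (h ▸ a.2)
    simp only [Matrix.of_apply, Matrix.add_apply, Matrix.vecMulVec_apply, hMdef, hudef, hvdef]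
    by_cases hab : G.Adj a.1 b.1 <;> by_cases hxa : G.Adj x a.1 <;>
      by_cases hxb : G.Adj x b.1 <;>
      simp [localComplement, hab, hxa, hxb, hne] <;> decide
  rw [hM']
  by_cases hx : x ∈ X
  · exact rank_add_vecMulVec_row M u v ⟨x, hx⟩
      (fun i => by simp [hvdef, hMdef]) (by simp [hudef])
  · exact rank_add_vecMulVec_col M u v ⟨x, Finset.mem_compl.mpr hx⟩
      (fun i => by simp [hudef, hMdef, G.adj_comm]) (by simp [hvdef])
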